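/- In a countable graph R with the extension property, for any finite sets A, B of vertices and any graph isomorphism f : A → B between the induced subgraphs, f extends to an automorphism of R. -/
import Mathlib


/-- A graph has the extension property if for all disjoint finite vertex sets `A`, `B`
there is a vertex outside `A ∪ B` adjacent to everything in `A` and nothing in `B`. -/
def HasExtensionProperty {V : Type*} (G : SimpleGraph V) : Prop :=
  ∀ A B : Finset V, Disjoint A B →
    ∃ v, v ∉ A ∧ v ∉ B ∧ (∀ a ∈ A, G.Adj v a) ∧ ∀ b ∈ B, ¬ G.Adj v b

/-- A finite partial isomorphism of `G`, given as the graph (set of pairs) of the map. -/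
structure PIso {V : Type*} (G : SimpleGraph V) where
  s : Finset (V × V)
  hinj : ∀ a ∈ s, ∀ b ∈ s, (a.1 = b.1 ↔ a.2 = b.2)
  hadj : ∀ a ∈ s, ∀ b ∈ s, (G.Adj a.1 b.1 ↔ G.Adj a.2 b.2)

namespace PIso

open scoped Classical

variable {V : Type*} {G : SimpleGraph V}

noncomputable def dom (p : PIso G) : Finset V := p.s.image Prod.fst
noncomputable def ran (p : PIso G) : Finset V := p.s.image Prod.snd

lemma mem_dom {p : PIso G} {v : V} : v ∈ p.dom ↔ ∃ w, (v, w) ∈ p.s := by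
  unfold dom
  rw [Finset.mem_image]
  constructor
  · rintro ⟨⟨a, b⟩, hab, rfl⟩
    exact ⟨b, hab⟩
  · rintro ⟨w, hw⟩
    exact ⟨(v, w), hw, rfl⟩

lemma mem_ran {p : PIso G} {w : V} : w ∈ p.ran ↔ ∃ v, (v, w) ∈ p.s := by
  unfold ran
  rw [Finset.mem_image]
  constructor
  · rintro ⟨⟨a, b⟩, hab, rfl⟩
    exact ⟨a, hab⟩
  · rintro ⟨v, hv⟩
    exact ⟨(v, w), hv, rfl⟩

/-- The inverse partial isomorphism. -/
noncomputable def symm (p : PIso G) : PIso G where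
  s := p.s.image Prod.swap
  hinj := by
    intro a ha b hb
    obtain ⟨x, hx, rfl⟩ := Finset.mem_image.mp ha
    obtain ⟨y, hy, rfl⟩ := Finset.mem_image.mp hb
    exact (p.hinj x hx y hy).symm
  hadj := by
    intro a ha b hb
    obtain ⟨x, hx, rfl⟩ := Finset.mem_image.mp ha
    obtain ⟨y, hy, rfl⟩ := Finset.mem_image.mp hb
    exact (p.hadj x hx y hy).symm

lemma mem_symm {p : PIso G} {x : V × V} : x ∈ p.symm.s ↔ x.swap ∈ p.s := by
  show x ∈ p.s.image Prod.swap ↔ _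
  rw [Finset.mem_image]
  constructor
  · rintro ⟨y, hy, rfl⟩
    simpa using hy
  · intro h
    exact ⟨x.swap, h, Prod.swap_swap x⟩

lemma ran_symm {p : PIso G} : p.symm.ran = p.dom := by
  ext w
  simp only [mem_ran, mem_dom]
  constructor
  · rintro ⟨v, hv⟩; exact ⟨v, by simpa using mem_symm.mp hv⟩
  · rintro ⟨v, hv⟩; exact ⟨v, mem_symm.mpr (by simpa using hv)⟩

/-- Key extension step: enlarge the domain to contain `v`. -/
lemma extend_dom (hG : HasExtensionProperty G) (p : PIso G) (v : V) :
    ∃ q : PIso G, p.s ⊆ q.s ∧ v ∈ q.dom := by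
  classical
  by_cases hv : v ∈ p.dom
  · exact ⟨p, subset_rfl, hv⟩
  · have hdisj : Disjoint ((p.s.filter (fun a => G.Adj v a.1)).image Prod.snd)
        ((p.s.filter (fun a => ¬ G.Adj v a.1)).image Prod.snd) := by
      rw [Finset.disjoint_left]
      intro w hwA hwB
      obtain ⟨a, haf, ha2⟩ := Finset.mem_image.mp hwA
      obtain ⟨b, hbf, hb2⟩ := Finset.mem_image.mp hwB
      obtain ⟨haS, hav⟩ := Finset.mem_filter.mp haf
      obtain ⟨hbS, hbv⟩ := Finset.mem_filter.mp hbf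
      have : a.1 = b.1 := (p.hinj a haS b hbS).mpr (ha2.trans hb2.symm)
      rw [this] at hav
      exact hbv hav
    obtain ⟨w, hwA, hwB, hadjA, hadjB⟩ := hG _ _ hdisj
    have hwran : w ∉ p.ran := by
      intro hw
      obtain ⟨u, hu⟩ := mem_ran.mp hw
      by_cases h : G.Adj v u
      · exact hwA (Finset.mem_image.mpr ⟨(u, w), Finset.mem_filter.mpr ⟨hu, h⟩, rfl⟩)
      · exact hwB (Finset.mem_image.mpr ⟨(u, w), Finset.mem_filter.mpr ⟨hu, h⟩, rfl⟩)
    have key : ∀ b ∈ p.s, (G.Adj v b.1 ↔ G.Adj w b.2) := by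
      intro b hb
      by_cases h : G.Adj v b.1
      · exact iff_of_true h (hadjA b.2
          (Finset.mem_image.mpr ⟨b, Finset.mem_filter.mpr ⟨hb, h⟩, rfl⟩))
      · exact iff_of_false h (hadjB b.2
          (Finset.mem_image.mpr ⟨b, Finset.mem_filter.mpr ⟨hb, h⟩, rfl⟩))
    have keyne : ∀ b ∈ p.s, (v = b.1 ↔ w = b.2) := by
      intro b hb
      constructor
      · intro h; exact absurd (mem_dom.mpr ⟨b.2, by rwa [h]⟩) hv
      · intro h; exact absurd (mem_ran.mpr ⟨b.1, by rwa [h]⟩) hwran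
    refine ⟨⟨insert (v, w) p.s, ?_, ?_⟩, Finset.subset_insert _ _,
      mem_dom.mpr ⟨w, Finset.mem_insert_self _ _⟩⟩
    · intro a ha b hb
      rcases Finset.mem_insert.mp ha with rfl | ha <;>
        rcases Finset.mem_insert.mp hb with rfl | hb
      · simp
      · exact keyne b hb
      · exact ⟨fun h => ((keyne a ha).mp h.symm).symm, fun h => ((keyne a ha).mpr h.symm).symm⟩
      · exact p.hinj a ha b hb
    · intro a ha b hb
      rcases Finset.mem_insert.mp ha with rfl | ha <;>
        rcases Finset.mem_insert.mp hb with rfl | hb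
      · simp
      · exact key b hb
      · simpa only [SimpleGraph.adj_comm] using key a ha
      · exact p.hadj a ha b hb

lemma extend_ran (hG : HasExtensionProperty G) (p : PIso G) (w : V) :
    ∃ q : PIso G, p.s ⊆ q.s ∧ w ∈ q.ran := by
  obtain ⟨q, hsub, hw⟩ := extend_dom hG p.symm w
  refine ⟨q.symm, ?_, ?_⟩
  · intro x hx
    rw [mem_symm]
    exact hsub (mem_symm.mpr (by simpa using hx))
  · rw [ran_symm]
    rcases mem_dom.mp hw with ⟨u, hu⟩
    exact mem_dom.mpr ⟨u, hu⟩

lemma dom_mono {p q : PIso G} (h : p.s ⊆ q.s) : p.dom ⊆ q.dom := by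
  unfold dom
  exact Finset.image_subset_image h

lemma ran_mono {p q : PIso G} (h : p.s ⊆ q.s) : p.ran ⊆ q.ran := by
  unfold ran
  exact Finset.image_subset_image h

lemma extend_both (hG : HasExtensionProperty G) (p : PIso G) (v w : V) :
    ∃ q : PIso G, p.s ⊆ q.s ∧ v ∈ q.dom ∧ w ∈ q.ran := by
  obtain ⟨q₁, h₁, hv⟩ := extend_dom hG p v
  obtain ⟨q₂, h₂, hw⟩ := extend_ran hG q₁ w
  exact ⟨q₂, h₁.trans h₂, dom_mono h₂ hv, hw⟩

end PIso

open PIso in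
/-- In a countable graph with the extension property, any isomorphism between finite
induced subgraphs extends to an automorphism of the whole graph. -/
theorem stmt8 {V : Type} [Countable V] [Infinite V] (G : SimpleGraph V)
    (hG : HasExtensionProperty G)
    (A B : Set V) (hA : A.Finite) (hB : B.Finite)
    (f : G.induce A ≃g G.induce B) :
    ∃ σ : G ≃g G, ∀ a : A, σ a = (f a : V) := by
  classical
  haveI := Encodable.ofCountable V
  haveI := Denumerable.ofEncodableOfInfinite V
  let e : V ≃ ℕ := Denumerable.eqv V
  haveI := hA.fintype
  -- the initial partial isomorphism: the graph of `f`
  let p0 : PIso G := ⟨Finset.univ.image (fun a : A => ((a : V), ((f a : B) : V))),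
    by
      intro x hx y hy
      obtain ⟨a, -, rfl⟩ := Finset.mem_image.mp hx
      obtain ⟨b, -, rfl⟩ := Finset.mem_image.mp hy
      simp only
      rw [← Subtype.ext_iff, ← Subtype.ext_iff]
      exact ⟨fun h => by rw [h], fun h => f.toEquiv.injective h⟩,
    by
      intro x hx y hy
      obtain ⟨a, -, rfl⟩ := Finset.mem_image.mp hx
      obtain ⟨b, -, rfl⟩ := Finset.mem_image.mp hy
      simp only
      have := f.map_rel_iff (a := a) (b := b)
      simpa [SimpleGraph.comap] using this.symm⟩
  have hp0 : ∀ a : A, ((a : V), ((f a : B) : V)) ∈ p0.s :=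
    fun a => Finset.mem_image.mpr ⟨a, Finset.mem_univ a, rfl⟩
  -- the back-and-forth chain
  let P : ℕ → PIso G := fun n => Nat.rec p0
    (fun n p => (extend_both hG p (e.symm n) (e.symm n)).choose) n
  have hPsucc : ∀ n, (P n).s ⊆ (P (n+1)).s ∧ e.symm n ∈ (P (n+1)).dom ∧
      e.symm n ∈ (P (n+1)).ran := fun n =>
    (extend_both hG (P n) (e.symm n) (e.symm n)).choose_spec
  have hmono : ∀ {m n : ℕ}, m ≤ n → (P m).s ⊆ (P n).s := by
    intro m n h
    induction n with
    | zero => simp_all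
    | succ n ih =>
      rcases Nat.lt_or_ge m (n+1) with h' | h'
      · exact (ih (Nat.lt_succ_iff.mp h')).trans (hPsucc n).1
      · have : m = n + 1 := le_antisymm h h'
        subst this; exact subset_rfl
  -- every vertex eventually appears in the domain and in the range
  have hdomall : ∀ v : V, ∃ n w, (v, w) ∈ (P n).s := by
    intro v
    obtain ⟨w, hw⟩ := PIso.mem_dom.mp (by simpa using (hPsucc (e v)).2.1)
    exact ⟨e v + 1, w, hw⟩
  have hranall : ∀ w : V, ∃ n v, (v, w) ∈ (P n).s := by
    intro w
    obtain ⟨v, hv⟩ := PIso.mem_ran.mp (by simpa using (hPsucc (e w)).2.2)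
    exact ⟨e w + 1, v, hv⟩
  -- uniqueness across the chain
  have huniq : ∀ {m n : ℕ} {v w w' : V}, (v, w) ∈ (P m).s → (v, w') ∈ (P n).s → w = w' := by
    intro m n v w w' h1 h2
    have h1' : (v, w) ∈ (P (max m n)).s := hmono (le_max_left m n) h1
    have h2' : (v, w') ∈ (P (max m n)).s := hmono (le_max_right m n) h2
    exact ((P (max m n)).hinj _ h1' _ h2').mp rfl
  have huniq' : ∀ {m n : ℕ} {v v' w : V}, (v, w) ∈ (P m).s → (v', w) ∈ (P n).s → v = v' := by
    intro m n v v' w h1 h2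
    have h1' : (v, w) ∈ (P (max m n)).s := hmono (le_max_left m n) h1
    have h2' : (v', w) ∈ (P (max m n)).s := hmono (le_max_right m n) h2
    exact ((P (max m n)).hinj _ h1' _ h2').mpr rfl
  -- the limit function
  have hex : ∀ v : V, ∃ w, ∃ n, (v, w) ∈ (P n).s := by
    intro v; obtain ⟨n, w, h⟩ := hdomall v; exact ⟨w, n, h⟩
  choose g hg using hex
  have hginj : Function.Injective g := by
    intro u v h
    obtain ⟨m, hm⟩ := hg u
    obtain ⟨n, hn⟩ := hg v
    rw [h] at hm
    exact huniq' hm hn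
  have hgsurj : Function.Surjective g := by
    intro w
    obtain ⟨n, v, hv⟩ := hranall w
    obtain ⟨m, hm⟩ := hg v
    exact ⟨v, huniq hm hv⟩
  have hgadj : ∀ u v : V, G.Adj (g u) (g v) ↔ G.Adj u v := by
    intro u v
    obtain ⟨m, hm⟩ := hg u
    obtain ⟨n, hn⟩ := hg v
    have hm' : (u, g u) ∈ (P (max m n)).s := hmono (le_max_left m n) hm
    have hn' : (v, g v) ∈ (P (max m n)).s := hmono (le_max_right m n) hn
    exact ((P (max m n)).hadj _ hm' _ hn').symm
  refine ⟨⟨Equiv.ofBijective g ⟨hginj, hgsurj⟩, ?_⟩, ?_⟩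
  · intro u v
    exact hgadj u v
  · intro a
    obtain ⟨m, hm⟩ := hg (a : V)
    exact huniq (n := 0) hm (hp0 a)
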